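/- Fix N ≥ 1, β_1,…,β_N > 0, E_u > 0, an integer τ ≥ N, an index n, and for M > N set p_p = τ·p_u, η_i = p_p·β_i/(1+p_p·β_i), c_M = Σ_{i=1}^N p_u·β_i/((1+p_p·β_i)(K_i+1)) + 1, Σ̃_M = diag(η_1/(K_1+1),…,η_N/(K_N+1)) + (1/M)·[Ω(Ω+I_N)^{-1}]^{1/2}·H̄_M^H H̄_M·[Ω(Ω+I_N)^{-1}]^{1/2} with Ω = diag(K_1,…,K_N), and R̃(M) = log₂( 1 + p_u·β_n·(M−N) / ( c_M·[Σ̃_M^{-1}]_{nn} ) ). (a) If K_1 = … = K_N = 0 and p_u = E_u/√M, then R̃(M) → log₂(1 + τ·E_u²·β_n²) as M → ∞. (b) If K_i > 0 for all i, the arrival angles satisfy sin(π(sin θ_n − sin θ_i)/2) ≠ 0 for all pairs n ≠ i, and p_u = E_u/M, then Σ̃_M is invertible for all sufficiently large M and R̃(M) → log₂(1 + K_n·E_u·β_n/(K_n+1)) as M → ∞. -/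

import Mathlib

open Filter Matrix

/-- The `M×N` steering matrix with entries `[H̄]_{mn} = exp(−i(m−1)π sin θ_n)`, `m = 1,…,M`. -/
noncomputable def steer {N : ℕ} (θ : Fin N → ℝ) (M : ℕ) : Matrix (Fin M) (Fin N) ℂ :=
  fun m n => Complex.exp (-Complex.I * ((m : ℕ) : ℂ) * (Real.pi : ℂ) * (Real.sin (θ n) : ℂ))

/-- The MMSE coefficient `η_i = p_p β_i / (1 + p_p β_i)`. -/
noncomputable def etaCoef {N : ℕ} (pp : ℝ) (β : Fin N → ℝ) (i : Fin N) : ℝ :=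
  pp * β i / (1 + pp * β i)

/-- The diagonal matrix `[Ω(Ω+I_N)^{-1}]^{1/2}` with entries `√(K_i/(K_i+1))`. -/
noncomputable def sqrtRicean {N : ℕ} (K : Fin N → ℝ) : Matrix (Fin N) (Fin N) ℂ :=
  Matrix.diagonal fun i => (Real.sqrt (K i / (K i + 1)) : ℂ)

/-- The matrix `Σ̃_M = diag(η_i/(K_i+1)) + (1/M)·[Ω(Ω+I_N)^{-1}]^{1/2} H̄_M^H H̄_M
[Ω(Ω+I_N)^{-1}]^{1/2}`, with pilot power `p_p = τ p_u`. -/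
noncomputable def sigmaTilde {N : ℕ} (θ K β : Fin N → ℝ) (τ : ℕ) (pu : ℝ) (M : ℕ) :
    Matrix (Fin N) (Fin N) ℂ :=
  Matrix.diagonal (fun i => ((etaCoef (τ * pu) β i / (K i + 1) : ℝ) : ℂ)) +
    ((M : ℂ))⁻¹ • (sqrtRicean K * ((steer θ M)ᴴ * steer θ M) * sqrtRicean K)

/-- The coefficient `c_M = Σ_{i=1}^N p_u β_i/((1+p_p β_i)(K_i+1)) + 1` with `p_p = τ p_u`. -/
noncomputable def cCoef {N : ℕ} (K β : Fin N → ℝ) (τ : ℕ) (pu : ℝ) : ℝ :=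
  (∑ i : Fin N, pu * β i / ((1 + (τ * pu) * β i) * (K i + 1))) + 1

/-- The closed-form approximation `R̃(M) = log₂(1 + p_u β_n (M−N)/(c_M [Σ̃_M^{-1}]_{nn}))`
of the ZF uplink rate with imperfect CSI. -/
noncomputable def zfRateApproxIP {N : ℕ} (θ K β : Fin N → ℝ) (τ : ℕ) (n : Fin N)
    (pu : ℝ) (M : ℕ) : ℝ :=
  Real.logb 2 (1 + pu * β n * ((M : ℝ) - N) /
    (cCoef K β τ pu * (((sigmaTilde θ K β τ pu M)⁻¹) n n).re))

lemma tendsto_logb (f : ℕ → ℝ) (a : ℝ) (ha : 0 < a)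
    (hf : Tendsto f atTop (nhds a)) :
    Tendsto (fun M => Real.logb 2 (f M)) atTop (nhds (Real.logb 2 a)) := by
  simp only [Real.logb]
  exact ((Real.continuousAt_log ha.ne').tendsto.comp hf).div_const _

lemma cCoef_tendsto {N : ℕ} (K β : Fin N → ℝ) (hK : ∀ i, 0 ≤ K i) (τ : ℕ)
    (pu : ℕ → ℝ) (hpu : Tendsto pu atTop (nhds 0)) :
    Tendsto (fun M => cCoef K β τ (pu M)) atTop (nhds 1) := by
  have h : Tendsto (fun M => ∑ i : Fin N, pu M * β i / ((1 + ((τ:ℝ) * pu M) * β i) * (K i + 1)))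
      atTop (nhds 0) := by
    have h0 : (0:ℝ) = ∑ _i : Fin N, 0 := by simp
    rw [h0]
    refine tendsto_finset_sum _ fun i _ => ?_
    have hnum : Tendsto (fun M => pu M * β i) atTop (nhds 0) := by
      simpa using hpu.mul_const (β i)
    have hden : Tendsto (fun M => (1 + ((τ:ℝ) * pu M) * β i) * (K i + 1)) atTop
        (nhds (K i + 1)) := by
      have := (((hpu.const_mul (τ:ℝ)).mul_const (β i)).const_add 1).mul_const (K i + 1)
      simpa using this
    have hKne : (K i + 1) ≠ 0 := by have := hK i; linarith
    have := hnum.div hden hKne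
    rw [zero_div] at this
    exact this
  have := h.add_const 1
  simp only [cCoef]
  simpa using this

lemma cCoef_pos {N : ℕ} (K β : Fin N → ℝ) (hK : ∀ i, 0 ≤ K i) (hβ : ∀ i, 0 < β i)
    (τ : ℕ) (pu : ℝ) (hpu : 0 ≤ pu) : 0 < cCoef K β τ pu := by
  have : (0:ℝ) ≤ ∑ i : Fin N, pu * β i / ((1 + ((τ:ℝ) * pu) * β i) * (K i + 1)) := by
    refine Finset.sum_nonneg fun i _ => ?_
    refine div_nonneg (mul_nonneg hpu (hβ i).le) (mul_nonneg ?_ (by linarith [hK i]))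
    have : (0:ℝ) ≤ (τ:ℝ) * pu * β i := mul_nonneg (mul_nonneg (Nat.cast_nonneg τ) hpu) (hβ i).le
    linarith
  unfold cCoef
  linarith

lemma tendsto_sub_div {N : ℕ} : Tendsto (fun M : ℕ => ((M:ℝ) - N)/M) atTop (nhds 1) := by
  have h : Tendsto (fun M : ℕ => 1 - (N:ℝ)/M) atTop (nhds 1) := by
    have := (tendsto_const_div_atTop_nhds_zero_nat (N:ℝ)).const_sub 1
    simpa using this
  refine h.congr' ?_
  filter_upwards [eventually_ge_atTop 1] with M hM
  have hM0 : (M:ℝ) ≠ 0 := by positivity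
  field_simp

lemma tendsto_div_sqrt (Eu : ℝ) : Tendsto (fun M : ℕ => Eu / Real.sqrt M) atTop (nhds 0) := by
  have h1 : Tendsto (fun M : ℕ => (Real.sqrt (M:ℝ))⁻¹) atTop (nhds 0) := by
    have := (Real.continuous_sqrt.tendsto 0).comp tendsto_inv_atTop_nhds_zero_nat
    simpa [Function.comp_def, Real.sqrt_inv] using this
  have := h1.const_mul Eu
  simp only [mul_zero] at this
  exact this.congr fun M => (div_eq_mul_inv _ _).symm

lemma sigmaTilde_K0 {N : ℕ} (θ K β : Fin N → ℝ) (τ : ℕ) (pu : ℝ) (M : ℕ)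
    (hK0 : ∀ i, K i = 0) :
    sigmaTilde θ K β τ pu M = Matrix.diagonal (fun i => ((etaCoef ((τ:ℝ) * pu) β i : ℝ) : ℂ)) := by
  have h0 : sqrtRicean K = 0 := by
    unfold sqrtRicean
    have h : (fun i => ((Real.sqrt (K i / (K i + 1)) : ℝ) : ℂ)) = fun _ => (0:ℂ) := by
      funext i; rw [hK0 i]; norm_num
    rw [h, Matrix.diagonal_zero]
  unfold sigmaTilde
  rw [h0]
  simp [hK0]

lemma inv_diag_entry {N : ℕ} (v : Fin N → ℝ) (hv : ∀ i, v i ≠ 0) (nn : Fin N) :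
    ((Matrix.diagonal (fun i => ((v i : ℝ) : ℂ)))⁻¹) nn nn = (((v nn)⁻¹ : ℝ) : ℂ) := by
  have h : (Matrix.diagonal (fun i => ((v i : ℝ):ℂ)))⁻¹
      = Matrix.diagonal (fun i => (((v i)⁻¹ : ℝ):ℂ)) := by
    apply Matrix.inv_eq_right_inv
    rw [Matrix.diagonal_mul_diagonal]
    have h1 : (fun i => ((v i : ℝ):ℂ) * (((v i)⁻¹ : ℝ):ℂ)) = fun _ => (1:ℂ) := by
      funext i; rw [← Complex.ofReal_mul, mul_inv_cancel₀ (hv i), Complex.ofReal_one]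
    rw [h1, Matrix.diagonal_one]
  rw [h, Matrix.diagonal_apply_eq]


lemma matrix_inv_apply {N : ℕ} (A : Matrix (Fin N) (Fin N) ℂ) (i j : Fin N) :
    A⁻¹ i j = (A.det)⁻¹ * A.adjugate i j := by
  rw [Matrix.inv_def, Ring.inverse_eq_inv', Matrix.smul_apply, smul_eq_mul]

lemma sigma_entry {N : ℕ} (θ K β : Fin N → ℝ) (τ : ℕ) (pu : ℝ) (M : ℕ) (i j : Fin N) :
    sigmaTilde θ K β τ pu M i j
      = (if i = j then ((etaCoef ((τ:ℝ) * pu) β i / (K i + 1) : ℝ) : ℂ) else 0)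
        + (M:ℂ)⁻¹ * ((Real.sqrt (K i / (K i + 1)) : ℂ) * (∑ m ∈ Finset.range M,
            (Complex.exp (Complex.I * Real.pi * (Real.sin (θ i) - Real.sin (θ j)))) ^ m)
          * (Real.sqrt (K j / (K j + 1)) : ℂ)) := by
  have hG : ((steer θ M)ᴴ * steer θ M) i j = ∑ m ∈ Finset.range M,
      (Complex.exp (Complex.I * Real.pi * (Real.sin (θ i) - Real.sin (θ j)))) ^ m := by
    rw [Matrix.mul_apply, ← Fin.sum_univ_eq_sum_range (fun m =>
      (Complex.exp (Complex.I * Real.pi * (Real.sin (θ i) - Real.sin (θ j)))) ^ m) M]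
    refine Finset.sum_congr rfl fun m _ => ?_
    rw [Matrix.conjTranspose_apply]
    unfold steer
    rw [← Complex.exp_nat_mul]
    rw [show star (Complex.exp (-Complex.I * ((m:ℕ):ℂ) * (Real.pi:ℂ) * (Real.sin (θ i) : ℂ)))
        = Complex.exp (Complex.I * ((m:ℕ):ℂ) * (Real.pi:ℂ) * (Real.sin (θ i):ℂ)) by
      rw [Complex.star_def, ← Complex.exp_conj]
      congr 1
      simp only [map_neg, _root_.map_mul, Complex.conj_I, Complex.conj_ofReal, map_natCast]
      ring]
    rw [← Complex.exp_add]
    congr 1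
    push_cast
    ring
  unfold sigmaTilde
  rw [Matrix.add_apply, Matrix.smul_apply, Matrix.diagonal_apply, smul_eq_mul]
  unfold sqrtRicean
  rw [Matrix.mul_diagonal, Matrix.diagonal_mul, hG]


/-- (Corollary 8 of the paper.)
(a) If all `K_i = 0` and `p_u = E_u/√M`, then `R̃(M) → log₂(1 + τ E_u² β_n²)`.
(b) If all `K_i > 0`, the arrival angles satisfy `sin(π(sin θ_n − sin θ_i)/2) ≠ 0` for
`n ≠ i`, and `p_u = E_u/M`, then `Σ̃_M` is invertible for all large `M` and
`R̃(M) → log₂(1 + K_n E_u β_n/(K_n+1))`. -/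
theorem zf_rate_approx_imperfect_csi_limits
    (N : ℕ) (hN : 1 ≤ N) (θ : Fin N → ℝ)
    (K : Fin N → ℝ) (hK : ∀ i, 0 ≤ K i)
    (β : Fin N → ℝ) (hβ : ∀ i, 0 < β i)
    (Eu : ℝ) (hEu : 0 < Eu) (τ : ℕ) (hτ : N ≤ τ) (n : Fin N) :
    ((∀ i, K i = 0) →
      Filter.Tendsto (fun M : ℕ => zfRateApproxIP θ K β τ n (Eu / Real.sqrt M) M)
        Filter.atTop (nhds (Real.logb 2 (1 + τ * Eu ^ 2 * β n ^ 2)))) ∧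
    ((∀ i, 0 < K i) →
      (∀ n' i : Fin N, n' ≠ i →
        Real.sin (Real.pi * (Real.sin (θ n') - Real.sin (θ i)) / 2) ≠ 0) →
      (∀ᶠ M : ℕ in Filter.atTop, IsUnit (sigmaTilde θ K β τ (Eu / M) M)) ∧
      Filter.Tendsto (fun M : ℕ => zfRateApproxIP θ K β τ n (Eu / M) M)
        Filter.atTop (nhds (Real.logb 2 (1 + K n * Eu * β n / (K n + 1))))) := by
  constructor
  intro hK0
  have hτ0 : 0 < (τ:ℝ) := by exact_mod_cast lt_of_lt_of_le hN hτ
  have key : ∀ᶠ M : ℕ in atTop,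
      zfRateApproxIP θ K β τ n (Eu / Real.sqrt M) M
        = Real.logb 2 (1 + (τ:ℝ) * Eu ^ 2 * β n ^ 2 * (((M:ℝ) - N)/M) /
            ((1 + (τ:ℝ) * (Eu / Real.sqrt M) * β n) * cCoef K β τ (Eu / Real.sqrt M))) := by
    filter_upwards [eventually_ge_atTop 1] with M hM
    have hMpos : (0:ℝ) < M := by exact_mod_cast hM
    set s := Real.sqrt (M:ℝ) with hsdef
    have hs : 0 < s := Real.sqrt_pos.mpr hMpos
    have hs2 : s ^ 2 = (M:ℝ) := Real.sq_sqrt hMpos.le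
    set pu := Eu / s with hpu
    have hpupos : 0 < pu := div_pos hEu hs
    have hη : ∀ i, etaCoef ((τ:ℝ) * pu) β i ≠ 0 := by
      intro i
      have h1 : 0 < (τ:ℝ) * pu * β i := mul_pos (mul_pos hτ0 hpupos) (hβ i)
      exact ne_of_gt (div_pos h1 (by linarith))
    have hσ := sigmaTilde_K0 θ K β τ pu M hK0
    have hinv : (((sigmaTilde θ K β τ pu M)⁻¹) n n).re = (etaCoef ((τ:ℝ) * pu) β n)⁻¹ := by
      rw [hσ, inv_diag_entry _ hη, Complex.ofReal_re]
    unfold zfRateApproxIP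
    rw [hinv]
    congr 1
    have hc := cCoef_pos K β hK hβ τ pu hpupos.le
    have h1p : 0 < 1 + (τ:ℝ) * pu * β n := by
      have := mul_pos (mul_pos hτ0 hpupos) (hβ n); linarith
    have hβn := hβ n
    have hτpuβ : (τ:ℝ) * pu * β n ≠ 0 := (mul_pos (mul_pos hτ0 hpupos) (hβ n)).ne'
    set c := cCoef K β τ pu with hcdef
    rw [← hs2]
    unfold etaCoef
    rw [inv_div, hpu]
    field_simp
  have hlim : Tendsto (fun M : ℕ => 1 + (τ:ℝ) * Eu ^ 2 * β n ^ 2 * (((M:ℝ) - N)/M) /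
      ((1 + (τ:ℝ) * (Eu / Real.sqrt M) * β n) * cCoef K β τ (Eu / Real.sqrt M))) atTop
      (nhds (1 + (τ:ℝ) * Eu ^ 2 * β n ^ 2)) := by
    have hnum := (tendsto_sub_div (N := N)).const_mul ((τ:ℝ) * Eu ^ 2 * β n ^ 2)
    have hpu0 := tendsto_div_sqrt Eu
    have hcc := cCoef_tendsto K β hK τ _ hpu0
    have hden : Tendsto (fun M : ℕ => (1 + (τ:ℝ) * (Eu / Real.sqrt M) * β n) *
        cCoef K β τ (Eu / Real.sqrt M)) atTop (nhds 1) := by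
      have h1 := ((hpu0.const_mul (τ:ℝ)).mul_const (β n)).const_add 1
      have h2 := h1.mul hcc
      simpa using h2
    have h3 := (hnum.div hden one_ne_zero).const_add 1
    simpa using h3
  have hpos : 0 < 1 + (τ:ℝ) * Eu ^ 2 * β n ^ 2 := by positivity
  refine Tendsto.congr' ?_ (tendsto_logb _ _ hpos hlim)
  filter_upwards [key] with M h
  exact h.symm
  intro hKp hangle
  set L : Matrix (Fin N) (Fin N) ℂ :=
    Matrix.diagonal (fun i => ((K i / (K i + 1) : ℝ) : ℂ)) with hL
  set S : ℕ → Matrix (Fin N) (Fin N) ℂ := fun M => sigmaTilde θ K β τ (Eu / M) M with hSdef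
  have hKd : ∀ i, 0 < K i / (K i + 1) := fun i => div_pos (hKp i) (by linarith [hKp i])
  -- convergence of S to L
  have hS : Tendsto S atTop (nhds L) := by
    refine tendsto_pi_nhds.2 ?_
    intro i
    rw [tendsto_pi_nhds]
    intro j
    by_cases hij : i = j
    · subst hij
      -- diagonal entry
      have heq : ∀ᶠ M : ℕ in atTop, S M i i
          = ((etaCoef ((τ:ℝ) * (Eu / M)) β i / (K i + 1) : ℝ) : ℂ) + ((K i / (K i + 1) : ℝ) : ℂ) := by
        filter_upwards [eventually_ge_atTop 1] with M hM
        have hM0 : ((M:ℂ)) ≠ 0 := by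
          simp only [ne_eq, Nat.cast_eq_zero]; omega
        rw [hSdef]
        simp only
        rw [sigma_entry]
        simp only [if_pos rfl]
        congr 1
        rw [sub_self, mul_zero, Complex.exp_zero]
        simp only [one_pow, Finset.sum_const, Finset.card_range, nsmul_eq_mul, mul_one]
        rw [show ((Real.sqrt (K i / (K i + 1)) : ℂ)) * (M:ℂ) * ((Real.sqrt (K i / (K i + 1)) : ℂ))
            = (M:ℂ) * (((Real.sqrt (K i / (K i + 1)) * Real.sqrt (K i / (K i + 1)) : ℝ)) : ℂ) by
          push_cast; ring]
        rw [← mul_assoc, inv_mul_cancel₀ hM0, one_mul, Real.mul_self_sqrt (hKd i).le]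
      have hreal : Tendsto (fun M : ℕ => etaCoef ((τ:ℝ) * (Eu / M)) β i / (K i + 1))
          atTop (nhds 0) := by
        have hpu0 : Tendsto (fun M : ℕ => (τ:ℝ) * (Eu / M)) atTop (nhds 0) := by
          simpa using (tendsto_const_div_atTop_nhds_zero_nat Eu).const_mul (τ:ℝ)
        have hnum : Tendsto (fun M : ℕ => (τ:ℝ) * (Eu / M) * β i) atTop (nhds 0) := by
          simpa using hpu0.mul_const (β i)
        have hden : Tendsto (fun M : ℕ => 1 + (τ:ℝ) * (Eu / M) * β i) atTop (nhds 1) := by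
          simpa using hnum.const_add 1
        have h5 : Tendsto (fun M : ℕ => etaCoef ((τ:ℝ) * (Eu / M)) β i) atTop (nhds 0) := by
          unfold etaCoef
          have := hnum.div hden one_ne_zero
          rw [zero_div] at this
          exact this
        simpa using h5.div_const (K i + 1)
      have hC : Tendsto (fun M : ℕ => ((etaCoef ((τ:ℝ) * (Eu / M)) β i / (K i + 1) : ℝ) : ℂ)
          + ((K i / (K i + 1) : ℝ) : ℂ)) atTop (nhds (L i i)) := by
        have h1 := (Complex.continuous_ofReal.tendsto 0).comp hreal
        have h2 := h1.add_const ((K i / (K i + 1) : ℝ) : ℂ)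
        simpa [hL, Matrix.diagonal_apply_eq] using h2
      refine Tendsto.congr' ?_ hC
      filter_upwards [heq] with M h
      exact h.symm
    · -- off-diagonal entry
      set z := Complex.exp (Complex.I * Real.pi * (Real.sin (θ i) - Real.sin (θ j))) with hz
      have hznorm : ‖z‖ = 1 := by
        rw [hz, Complex.norm_exp]
        norm_num [Complex.mul_re, Complex.mul_im]
      have hz1 : z ≠ 1 := by
        intro h
        rw [hz, Complex.exp_eq_one_iff] at h
        obtain ⟨k, hk⟩ := h
        have hk' : ((Real.pi * (Real.sin (θ i) - Real.sin (θ j)) : ℝ) : ℂ) * Complex.I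
            = (((2 * Real.pi * k : ℝ)) : ℂ) * Complex.I := by
          simp only [Complex.ofReal_mul, Complex.ofReal_sub, Complex.ofReal_ofNat,
            Complex.ofReal_intCast]
          linear_combination hk
        have hre : Real.pi * (Real.sin (θ i) - Real.sin (θ j)) = 2 * Real.pi * k := by
          have h2 := mul_right_cancel₀ Complex.I_ne_zero hk'
          exact_mod_cast h2
        apply hangle i j hij
        rw [show Real.pi * (Real.sin (θ i) - Real.sin (θ j)) / 2 = (k:ℝ) * Real.pi by linarith]
        exact Real.sin_int_mul_pi k
      have hzd : (0:ℝ) < ‖z - 1‖ := by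
        rw [norm_pos_iff]
        exact sub_ne_zero.mpr hz1
      have hsum : ∀ M : ℕ, ‖∑ m ∈ Finset.range M, z ^ m‖ ≤ 2 / ‖z - 1‖ := by
        intro M
        rw [geom_sum_eq hz1, norm_div]
        gcongr
        calc ‖z ^ M - 1‖ ≤ ‖z ^ M‖ + ‖(1:ℂ)‖ := norm_sub_le _ _
          _ = 2 := by rw [norm_pow, hznorm]; norm_num
      set a := Real.sqrt (K i / (K i + 1)) with hadef
      set b := Real.sqrt (K j / (K j + 1)) with hbdef
      have ha0 : 0 ≤ a := Real.sqrt_nonneg _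
      have hb0 : 0 ≤ b := Real.sqrt_nonneg _
      have hb : ∀ M : ℕ, ‖S M i j‖ ≤ (a * b * (2 / ‖z - 1‖)) / M := by
        intro M
        rw [hSdef]
        simp only
        rw [sigma_entry, if_neg hij, zero_add]
        rw [norm_mul, norm_mul, norm_mul, norm_inv]
        rw [Complex.norm_natCast, Complex.norm_real, Complex.norm_real,
          Real.norm_of_nonneg (Real.sqrt_nonneg _), Real.norm_of_nonneg (Real.sqrt_nonneg _),
          ← hz, ← hadef, ← hbdef]
        calc ((M:ℝ))⁻¹ * (a * ‖∑ m ∈ Finset.range M, z ^ m‖ * b)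
            ≤ ((M:ℝ))⁻¹ * (a * (2 / ‖z - 1‖) * b) := by
              gcongr
              exact hsum M
          _ = (a * b * (2 / ‖z - 1‖)) / M := by rw [div_eq_mul_inv]; ring
      have h0 : Tendsto (fun M : ℕ => S M i j) atTop (nhds 0) :=
        squeeze_zero_norm hb (tendsto_const_div_atTop_nhds_zero_nat _)
      simpa [hL, Matrix.diagonal_apply_ne _ hij] using h0
  -- determinant facts
  have hdet : Tendsto (fun M => (S M).det) atTop (nhds L.det) :=
    (continuous_id.matrix_det.tendsto L).comp hS
  have hdetL : L.det ≠ 0 := by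
    rw [hL, Matrix.det_diagonal]
    refine Finset.prod_ne_zero_iff.mpr fun i _ => ?_
    exact_mod_cast (hKd i).ne'
  have hdetne : ∀ᶠ M : ℕ in atTop, (S M).det ≠ 0 := hdet.eventually_ne hdetL
  constructor
  · filter_upwards [hdetne] with M h
    exact (Matrix.isUnit_iff_isUnit_det _).mpr (isUnit_iff_ne_zero.mpr h)
  · -- the rate limit
    have hadj : Tendsto (fun M => (S M).adjugate n n) atTop (nhds (L.adjugate n n)) :=
      ((continuous_id.matrix_adjugate.matrix_elem n n).tendsto L).comp hS
    have hinv : Tendsto (fun M => ((S M)⁻¹) n n) atTop (nhds ((L⁻¹) n n)) := by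
      have h1 := (hdet.inv₀ hdetL).mul hadj
      rw [show (L⁻¹) n n = (L.det)⁻¹ * L.adjugate n n from matrix_inv_apply L n n]
      refine h1.congr fun M => (matrix_inv_apply (S M) n n).symm
    have hLinv : (L⁻¹) n n = (((K n / (K n + 1))⁻¹ : ℝ) : ℂ) := by
      rw [hL]
      exact inv_diag_entry (fun i => K i / (K i + 1)) (fun i => (hKd i).ne') n
    have hre : Tendsto (fun M => (((S M)⁻¹) n n).re) atTop (nhds ((K n / (K n + 1))⁻¹)) := by
      have := (Complex.continuous_re.tendsto _).comp hinv
      simpa [hLinv, Function.comp_def] using this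
    -- numerator
    have hnum : Tendsto (fun M : ℕ => (Eu / M) * β n * ((M:ℝ) - N)) atTop (nhds (Eu * β n)) := by
      have h1 := (tendsto_sub_div (N := N)).const_mul (Eu * β n)
      simp only [mul_one] at h1
      refine Tendsto.congr' ?_ h1
      filter_upwards [eventually_ge_atTop 1] with M hM
      have hM0 : (M:ℝ) ≠ 0 := by positivity
      field_simp
    have hpu0 : Tendsto (fun M : ℕ => Eu / (M:ℝ)) atTop (nhds 0) :=
      tendsto_const_div_atTop_nhds_zero_nat Eu
    have hcc := cCoef_tendsto K β hK τ _ hpu0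
    have hrne : ((K n / (K n + 1))⁻¹ : ℝ) ≠ 0 := inv_ne_zero (hKd n).ne'
    have hden : Tendsto (fun M : ℕ => cCoef K β τ (Eu / M) * (((S M)⁻¹) n n).re) atTop
        (nhds ((K n / (K n + 1))⁻¹)) := by
      have := hcc.mul hre
      simpa using this
    have hfrac := hnum.div hden hrne
    have hinner := hfrac.const_add 1
    have hval : 1 + (Eu * β n) / ((K n / (K n + 1))⁻¹) = 1 + K n * Eu * β n / (K n + 1) := by
      rw [inv_div]
      field_simp
    rw [hval] at hinner
    have hpos : 0 < 1 + K n * Eu * β n / (K n + 1) := by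
      have h1 : 0 < K n * Eu * β n / (K n + 1) :=
        div_pos (mul_pos (mul_pos (hKp n) hEu) (hβ n)) (by linarith [hKp n])
      linarith
    have := tendsto_logb _ _ hpos hinner
    refine this.congr fun M => ?_
    simp only [zfRateApproxIP, Pi.div_apply, hSdef]
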